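/- If a locally integrable function s : [1, ∞) → ℂ is Cesàro summable (C,1) to A ∈ ℂ, i.e. (1/t) ∫₁ᵗ s(u) du → A as t → ∞, then s is also summable (L,1) to A, i.e. (1/log t) ∫₁ᵗ s(u)/u du → A as t → ∞. -/

import Mathlib

open Filter MeasureTheory Set

/-- Logarithmic averaging: if `h → A` and `h` is continuous on `[1, ∞)`, then
`(1/log t) ∫₁ᵗ h(v)/v dv → A`. -/
private lemma log_avg (h : ℝ → ℂ) (A : ℂ) (hc : ContinuousOn h (Ici 1))
    (hA : Tendsto h atTop (nhds A)) :
    Tendsto (fun t : ℝ => ((Real.log t : ℂ))⁻¹ * ∫ v in (1:ℝ)..t, h v / v)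
      atTop (nhds A) := by
  have hvne : ∀ v : ℝ, v ∈ Ici (1:ℝ) → (v : ℂ) ≠ 0 := by
    intro v hv
    exact_mod_cast ne_of_gt (lt_of_lt_of_le one_pos hv : (0:ℝ) < v)
  set e : ℝ → ℂ := fun v => h v - A with he
  have hecont : ContinuousOn (fun v : ℝ => e v / (v : ℂ)) (Ici 1) :=
    (hc.sub continuousOn_const).div (Complex.continuous_ofReal.continuousOn) hvne
  have hsub : ∀ a b : ℝ, 1 ≤ a → 1 ≤ b → uIcc a b ⊆ Ici (1:ℝ) := by
    intro a b ha hb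
    rw [uIcc]
    exact Icc_subset_Ici_self.trans (Ici_subset_Ici.mpr (le_min ha hb))
  have hii : ∀ a b : ℝ, 1 ≤ a → 1 ≤ b →
      IntervalIntegrable (fun v : ℝ => e v / (v : ℂ)) volume a b := fun a b ha hb =>
    (hecont.mono (hsub a b ha hb)).intervalIntegrable
  have he0 : Tendsto e atTop (nhds 0) := by
    simpa using hA.sub (tendsto_const_nhds (x := A))
  have key : Tendsto (fun t : ℝ => ((Real.log t : ℂ))⁻¹ * ∫ v in (1:ℝ)..t, e v / v)
      atTop (nhds 0) := by
    rw [NormedAddCommGroup.tendsto_nhds_zero]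
    intro ε hε
    have hev : ∀ᶠ v in atTop, ‖e v‖ < ε / 2 :=
      (by simpa using he0.norm : Tendsto (fun v => ‖e v‖) atTop (nhds 0)).eventually_lt_const (half_pos hε)
    obtain ⟨T₀, hT₀⟩ := eventually_atTop.mp hev
    set T : ℝ := max T₀ 1 with hTdef
    have hT1 : (1:ℝ) ≤ T := le_max_right _ _
    set C : ℝ := ‖∫ v in (1:ℝ)..T, e v / v‖ with hCdef
    have hC0 : 0 ≤ C := norm_nonneg _
    filter_upwards [eventually_ge_atTop T,
      Real.tendsto_log_atTop.eventually_gt_atTop (max (2 * C / ε) 0)] with t htT hlt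
    have hlogpos : 0 < Real.log t := lt_of_le_of_lt (le_max_right _ _) hlt
    have h2C : 2 * C / ε < Real.log t := lt_of_le_of_lt (le_max_left _ _) hlt
    have hsplit : (∫ v in (1:ℝ)..t, e v / v)
        = (∫ v in (1:ℝ)..T, e v / v) + ∫ v in T..t, e v / v :=
      (intervalIntegral.integral_add_adjacent_intervals (hii 1 T le_rfl hT1)
        (hii T t hT1 (hT1.trans htT))).symm
    have hTpos : (0:ℝ) < T := lt_of_lt_of_le one_pos hT1
    have hbound2 : ‖∫ v in T..t, e v / v‖ ≤ ε / 2 * Real.log t := by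
      have hb : ‖∫ v in T..t, e v / v‖ ≤ |∫ v in T..t, ε / 2 * v⁻¹| := by
        apply intervalIntegral.norm_integral_le_abs_of_norm_le
        · filter_upwards [ae_restrict_mem measurableSet_uIoc] with v hv
          rw [uIoc_of_le htT] at hv
          have hvT : T < v := hv.1
          have hv1 : (1:ℝ) < v := lt_of_le_of_lt hT1 hvT
          have hvpos : (0:ℝ) < v := lt_trans one_pos hv1
          have hnorm : ‖e v / (v:ℂ)‖ = ‖e v‖ / v := by
            rw [norm_div, Complex.norm_real, Real.norm_eq_abs, abs_of_pos hvpos]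
          rw [hnorm]
          have hle : ‖e v‖ ≤ ε / 2 := le_of_lt (hT₀ v (le_of_lt (lt_of_le_of_lt (le_max_left _ _) hvT)))
          calc ‖e v‖ / v ≤ (ε / 2) / v := by gcongr
            _ = ε / 2 * v⁻¹ := by ring
        · exact (ContinuousOn.intervalIntegrable (by
            apply ContinuousOn.mul continuousOn_const
            apply ContinuousOn.inv₀ continuousOn_id
            intro v hv
            have := hsub T t hT1 (hT1.trans htT) hv
            exact ne_of_gt (lt_of_lt_of_le one_pos this)))
      have hint : (∫ v in T..t, ε / 2 * v⁻¹) = ε / 2 * Real.log (t / T) := by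
        rw [intervalIntegral.integral_const_mul, integral_inv]
        intro h0
        have := hsub T t hT1 (hT1.trans htT) h0
        simp at this
        linarith
      have hlogdiv : Real.log (t / T) = Real.log t - Real.log T :=
        Real.log_div (ne_of_gt (lt_of_lt_of_le hTpos htT)) (ne_of_gt hTpos)
      have hlogT : 0 ≤ Real.log T := Real.log_nonneg hT1
      have habs : |∫ v in T..t, ε / 2 * v⁻¹| ≤ ε / 2 * Real.log t := by
        rw [hint, hlogdiv, abs_of_nonneg]
        · nlinarith
        · have : Real.log T ≤ Real.log t := Real.log_le_log hTpos htT
          nlinarith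
      exact hb.trans habs
    have hnorm1 : ‖((Real.log t : ℂ))⁻¹‖ = (Real.log t)⁻¹ := by
      rw [norm_inv, Complex.norm_real, Real.norm_eq_abs, abs_of_pos hlogpos]
    calc ‖((Real.log t : ℂ))⁻¹ * ∫ v in (1:ℝ)..t, e v / v‖
        = (Real.log t)⁻¹ * ‖∫ v in (1:ℝ)..t, e v / v‖ := by rw [norm_mul, hnorm1]
      _ ≤ (Real.log t)⁻¹ * (C + ε / 2 * Real.log t) := by
          apply mul_le_mul_of_nonneg_left _ (inv_nonneg.mpr (le_of_lt hlogpos))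
          rw [hsplit]
          exact (norm_add_le _ _).trans (add_le_add le_rfl hbound2)
      _ = C / Real.log t + ε / 2 := by field_simp
      _ < ε := by
          have hClt : C / Real.log t < ε / 2 := by
            rw [div_lt_iff₀ hlogpos]
            rw [div_lt_iff₀ hε] at h2C
            nlinarith
          linarith
  have hAe : ∀ᶠ t : ℝ in atTop,
      A + ((Real.log t : ℂ))⁻¹ * ∫ v in (1:ℝ)..t, e v / v
        = ((Real.log t : ℂ))⁻¹ * ∫ v in (1:ℝ)..t, h v / v := by
    filter_upwards [eventually_gt_atTop (1:ℝ)] with t ht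
    have hlogpos : 0 < Real.log t := Real.log_pos ht
    have hlogne : ((Real.log t : ℝ) : ℂ) ≠ 0 :=
      Complex.ofReal_ne_zero.mpr (ne_of_gt hlogpos)
    have hAint : IntervalIntegrable (fun v : ℝ => A * ((v⁻¹ : ℝ) : ℂ)) volume 1 t := by
      apply ContinuousOn.intervalIntegrable
      apply ContinuousOn.mul continuousOn_const
      apply Continuous.comp_continuousOn Complex.continuous_ofReal
      apply ContinuousOn.inv₀ continuousOn_id
      intro v hv
      have := hsub 1 t le_rfl (le_of_lt ht) hv
      exact ne_of_gt (lt_of_lt_of_le one_pos this)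
    have hi1 : (∫ v in (1:ℝ)..t, h v / v)
        = A * (Real.log t : ℂ) + ∫ v in (1:ℝ)..t, e v / v := by
      have hcongr : EqOn (fun v : ℝ => h v / (v:ℂ))
          (fun v : ℝ => A * ((v⁻¹ : ℝ) : ℂ) + e v / (v:ℂ)) (uIcc 1 t) := by
        intro v hv
        have hv1 := hsub 1 t le_rfl (le_of_lt ht) hv
        have hvne' : (v:ℂ) ≠ 0 := hvne v hv1
        simp only [he]
        push_cast
        field_simp
        ring
      rw [intervalIntegral.integral_congr hcongr,
        intervalIntegral.integral_add hAint (hii 1 t le_rfl (le_of_lt ht)),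
        intervalIntegral.integral_const_mul, intervalIntegral.integral_ofReal,
        integral_inv]
      · norm_num
      · intro h0
        have := hsub 1 t le_rfl (le_of_lt ht) h0
        simp at this
        linarith
    rw [hi1, mul_add, ← mul_assoc, mul_comm (((Real.log t : ℝ) : ℂ))⁻¹ A,
      mul_assoc, inv_mul_cancel₀ hlogne, mul_one]
  have := (tendsto_const_nhds (x := A)).add key
  rw [add_zero] at this
  exact this.congr' hAe

private lemma parts (s₁ : ℝ → ℂ) (hint : ∀ a b : ℝ, IntervalIntegrable s₁ volume a b)
    {t : ℝ} (ht : 1 ≤ t) :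
    ∫ u in Ioc (1:ℝ) t, s₁ u / u
      = (t:ℂ)⁻¹ * (∫ u in Ioc (1:ℝ) t, s₁ u)
        + ∫ v in Ioc (1:ℝ) t, (∫ u in Ioc (1:ℝ) v, s₁ u) * (((v^2 : ℝ)) : ℂ)⁻¹ := by
  have hsInt : IntegrableOn s₁ (Ioc 1 t) := (hint 1 t).1
  have hsIntIcc : IntegrableOn s₁ (Icc 1 t) :=
    (integrableOn_Icc_iff_integrableOn_Ioc).mpr hsInt
  set μ := volume.restrict (Ioc (1:ℝ) t) with hμ
  set F : ℝ → ℝ → ℂ := fun u v =>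
    {p : ℝ × ℝ | p.1 ≤ p.2}.indicator (fun p => s₁ p.1 * ((p.2 ^ 2 : ℝ) : ℂ)⁻¹) (u, v) with hF
  have hmeas : MeasurableSet {p : ℝ × ℝ | p.1 ≤ p.2} :=
    measurableSet_le measurable_fst measurable_snd
  have hwcont : ContinuousOn (fun v : ℝ => ((v ^ 2 : ℝ) : ℂ)⁻¹) (Icc 1 t) := by
    apply ContinuousOn.inv₀
    · exact (Complex.continuous_ofReal.comp (continuous_pow 2)).continuousOn
    · intro v hv
      have hv1 : (1:ℝ) ≤ v := hv.1
      have : (v:ℝ)^2 ≠ 0 := by positivity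
      exact_mod_cast this
  have hw : IntegrableOn (fun v : ℝ => ((v ^ 2 : ℝ) : ℂ)⁻¹) (Ioc 1 t) :=
    (hwcont.integrableOn_compact isCompact_Icc).mono_set Ioc_subset_Icc_self
  have hFint : Integrable (Function.uncurry F) (μ.prod μ) := by
    have huncurry : Function.uncurry F
        = {p : ℝ × ℝ | p.1 ≤ p.2}.indicator (fun p => s₁ p.1 * ((p.2 ^ 2 : ℝ) : ℂ)⁻¹) := by
      funext p; cases p; rfl
    rw [huncurry]
    exact (Integrable.mul_prod hsInt hw).indicator hmeas
  have swap := MeasureTheory.integral_integral_swap hFint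
  -- left side
  have hL : (∫ u, (∫ v, F u v ∂μ) ∂μ)
      = ∫ u in Ioc (1:ℝ) t, s₁ u * (((u⁻¹ - t⁻¹ : ℝ)) : ℂ) := by
    rw [hμ]
    apply setIntegral_congr_fun measurableSet_Ioc
    intro u hu
    have hu1 : (1:ℝ) < u := hu.1
    have hut : u ≤ t := hu.2
    have hFu : (fun v => F u v) = (Ici u).indicator (fun v => s₁ u * ((v ^ 2 : ℝ) : ℂ)⁻¹) := by
      funext v
      simp only [F, Set.indicator_apply, mem_setOf_eq, mem_Ici]
    show (∫ v in Ioc (1:ℝ) t, F u v) = s₁ u * (((u⁻¹ - t⁻¹ : ℝ)) : ℂ)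
    rw [hFu, integral_indicator measurableSet_Ici,
      Measure.restrict_restrict measurableSet_Ici]
    have hset : Ici u ∩ Ioc 1 t = Icc u t := by
      ext x
      simp only [mem_inter_iff, mem_Ici, mem_Ioc, mem_Icc]
      exact ⟨fun ⟨h1, h2⟩ => ⟨h1, h2.2⟩, fun ⟨h1, h2⟩ => ⟨h1, lt_of_lt_of_le hu1 h1, h2⟩⟩
    rw [hset, integral_Icc_eq_integral_Ioc, ← intervalIntegral.integral_of_le hut,
      intervalIntegral.integral_const_mul]
    congr 1
    have hcast : ∀ v : ℝ, ((v ^ 2 : ℝ) : ℂ)⁻¹ = (((v ^ 2)⁻¹ : ℝ) : ℂ) := by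
      intro v; rw [Complex.ofReal_inv]
    simp_rw [hcast]
    rw [intervalIntegral.integral_ofReal]
    congr 1
    have h0 : (0:ℝ) ∉ uIcc u t := by
      rw [uIcc_of_le hut]
      intro hmem
      have := hmem.1
      linarith
    have hz := integral_zpow (a := u) (b := t) (n := -2) (Or.inr ⟨by norm_num, h0⟩)
    have hzeq : ∀ x : ℝ, x ^ (-2 : ℤ) = (x ^ 2)⁻¹ := by
      intro x
      rw [zpow_neg]
      norm_cast
    simp_rw [hzeq] at hz
    rw [hz]
    have hune : u ≠ 0 := by intro h; rw [h] at hu1; linarith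
    have htne : t ≠ 0 := by intro h; rw [h] at ht; linarith
    rw [show ((-2 : ℤ) + 1) = -1 by norm_num]
    push_cast
    rw [zpow_neg_one, zpow_neg_one]
    field_simp
    ring
  -- right side
  have hR : (∫ v, (∫ u, F u v ∂μ) ∂μ)
      = ∫ v in Ioc (1:ℝ) t, (∫ u in Ioc (1:ℝ) v, s₁ u) * ((v ^ 2 : ℝ) : ℂ)⁻¹ := by
    rw [hμ]
    apply setIntegral_congr_fun measurableSet_Ioc
    intro v hv
    have hv1 : (1:ℝ) < v := hv.1
    have hvt : v ≤ t := hv.2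
    have hFv : (fun u => F u v) = (Iic v).indicator (fun u => s₁ u * ((v ^ 2 : ℝ) : ℂ)⁻¹) := by
      funext u
      simp only [F, Set.indicator_apply, mem_setOf_eq, mem_Iic]
    show (∫ u in Ioc (1:ℝ) t, F u v) = (∫ u in Ioc (1:ℝ) v, s₁ u) * ((v ^ 2 : ℝ) : ℂ)⁻¹
    rw [hFv, integral_indicator measurableSet_Iic,
      Measure.restrict_restrict measurableSet_Iic]
    have hset : Iic v ∩ Ioc 1 t = Ioc 1 v := by
      ext x
      simp only [mem_inter_iff, mem_Iic, mem_Ioc]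
      exact ⟨fun ⟨h1, h2⟩ => ⟨h2.1, h1⟩, fun ⟨h1, h2⟩ => ⟨h2, h1, le_trans h2 hvt⟩⟩
    rw [hset, integral_mul_const]
  rw [hL, hR] at swap
  -- expand the left side of swap
  have hmul : ∀ u ∈ Ioc (1:ℝ) t,
      s₁ u * (((u⁻¹ - t⁻¹ : ℝ)) : ℂ) = s₁ u / u - s₁ u * (t:ℂ)⁻¹ := by
    intro u hu
    push_cast
    rw [div_eq_mul_inv]
    ring
  rw [setIntegral_congr_fun measurableSet_Ioc hmul] at swap
  have hi1 : IntegrableOn (fun u : ℝ => s₁ u / (u : ℂ)) (Ioc 1 t) := by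
    have hc : ContinuousOn (fun u : ℝ => ((u : ℂ))⁻¹) (Icc 1 t) := by
      apply ContinuousOn.inv₀ Complex.continuous_ofReal.continuousOn
      intro u hu
      have hu1 : (1:ℝ) ≤ u := hu.1
      exact_mod_cast (by linarith : (u:ℝ) ≠ 0)
    have := hsIntIcc.mul_continuousOn hc isCompact_Icc
    simp_rw [div_eq_mul_inv]
    exact this.mono_set Ioc_subset_Icc_self
  have hi2 : IntegrableOn (fun u : ℝ => s₁ u * (t:ℂ)⁻¹) (Ioc 1 t) := hsInt.mul_const _
  rw [integral_sub hi1 hi2, integral_mul_const] at swap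
  rw [show (t:ℂ)⁻¹ * (∫ u in Ioc (1:ℝ) t, s₁ u) = (∫ u in Ioc (1:ℝ) t, s₁ u) * (t:ℂ)⁻¹ from mul_comm _ _]
  linear_combination swap

theorem cesaro_implies_logarithmic
    (s : ℝ → ℂ) (hs : ∀ t : ℝ, IntegrableOn s (Icc 1 t)) (A : ℂ)
    (hC1 : Tendsto (fun t : ℝ => ((t : ℂ))⁻¹ * ∫ u in Ioc (1:ℝ) t, s u)
      atTop (nhds A)) :
    Tendsto (fun t : ℝ => ((Real.log t : ℂ))⁻¹ * ∫ u in Ioc (1:ℝ) t, s u / (u : ℂ))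
      atTop (nhds A) := by
  classical
  set s₁ : ℝ → ℂ := (Ici (1:ℝ)).indicator s with hs₁
  have hcongr : ∀ t : ℝ, ∀ u ∈ Ioc (1:ℝ) t, s₁ u = s u := by
    intro t u hu
    exact indicator_of_mem (le_of_lt hu.1) s
  have hIntOn : ∀ c d : ℝ, IntegrableOn s₁ (Ioc c d) := by
    intro c d
    rw [hs₁, IntegrableOn, integrable_indicator_iff measurableSet_Ici]
    rw [IntegrableOn, Measure.restrict_restrict measurableSet_Ici]
    exact (hs d).mono_set (fun x hx => ⟨hx.1, hx.2.2⟩)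
  have hint : ∀ a b : ℝ, IntervalIntegrable s₁ volume a b := fun a b =>
    ⟨hIntOn a b, hIntOn b a⟩
  have hIoc : ∀ t : ℝ, (∫ u in Ioc (1:ℝ) t, s u) = ∫ u in Ioc (1:ℝ) t, s₁ u := by
    intro t
    exact setIntegral_congr_fun measurableSet_Ioc (fun u hu => (hcongr t u hu).symm)
  set Sc : ℝ → ℂ := fun x => ∫ u in (1:ℝ)..x, s₁ u with hSc
  have hSccont : Continuous Sc := intervalIntegral.continuous_primitive hint 1
  have hSeq : ∀ t : ℝ, 1 ≤ t → (∫ u in Ioc (1:ℝ) t, s₁ u) = Sc t := by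
    intro t ht
    exact (intervalIntegral.integral_of_le ht).symm
  have hvne : ∀ v : ℝ, v ∈ Ici (1:ℝ) → (v : ℂ) ≠ 0 := by
    intro v hv
    exact_mod_cast ne_of_gt (lt_of_lt_of_le one_pos hv : (0:ℝ) < v)
  set h : ℝ → ℂ := fun v => ((v : ℂ))⁻¹ * Sc v with hh
  have hhc : ContinuousOn h (Ici 1) :=
    (ContinuousOn.inv₀ Complex.continuous_ofReal.continuousOn hvne).mul
      hSccont.continuousOn
  have hhA : Tendsto h atTop (nhds A) := by
    apply hC1.congr'
    filter_upwards [eventually_ge_atTop (1:ℝ)] with t ht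
    rw [hIoc t, hSeq t ht]
  have main := log_avg h A hhc hhA
  have hzero : Tendsto (fun t : ℝ => ((Real.log t : ℂ))⁻¹ * h t) atTop (nhds 0) := by
    have hz : Tendsto (fun t : ℝ => ((Real.log t : ℂ))⁻¹) atTop (nhds 0) := by
      have h1 : Tendsto (fun t : ℝ => (Real.log t)⁻¹) atTop (nhds 0) :=
        tendsto_inv_atTop_zero.comp Real.tendsto_log_atTop
      have h2 := (Complex.continuous_ofReal.tendsto 0).comp h1
      simpa [Function.comp_def, Complex.ofReal_inv] using h2
    simpa using hz.mul hhA
  have hgoal : ∀ᶠ t : ℝ in atTop,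
      ((Real.log t : ℂ))⁻¹ * h t + ((Real.log t : ℂ))⁻¹ * ∫ v in (1:ℝ)..t, h v / v
        = ((Real.log t : ℂ))⁻¹ * ∫ u in Ioc (1:ℝ) t, s u / u := by
    filter_upwards [eventually_ge_atTop (1:ℝ)] with t ht
    have h1 : (∫ u in Ioc (1:ℝ) t, s u / (u : ℂ)) = ∫ u in Ioc (1:ℝ) t, s₁ u / u :=
      setIntegral_congr_fun measurableSet_Ioc (fun u hu => by rw [hcongr t u hu])
    have h2 : (∫ v in Ioc (1:ℝ) t, (∫ u in Ioc (1:ℝ) v, s₁ u) * (((v^2 : ℝ)) : ℂ)⁻¹)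
        = ∫ v in (1:ℝ)..t, h v / v := by
      rw [intervalIntegral.integral_of_le ht]
      apply setIntegral_congr_fun measurableSet_Ioc
      intro v hv
      show (∫ u in Ioc (1:ℝ) v, s₁ u) * ((v^2 : ℝ) : ℂ)⁻¹ = h v / v
      rw [hSeq v (le_of_lt hv.1)]
      have hv0 : (v : ℂ) ≠ 0 := hvne v (le_of_lt hv.1)
      show Sc v * ((v^2 : ℝ) : ℂ)⁻¹ = (v:ℂ)⁻¹ * Sc v / v
      push_cast
      rw [div_eq_mul_inv, sq, mul_inv]
      ring
    rw [h1, parts s₁ hint ht, mul_add, hSeq t ht, h2, hh]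
  refine Tendsto.congr' hgoal ?_
  have := hzero.add main
  rw [zero_add] at this
  exact this
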